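/- Let (V,E,μ) be a finite connected weighted graph with N ≥ 2 vertices, and suppose there are K > 1 and L > 0 with K⁻¹L ≤ μ(i) ≤ KL for every vertex i and K⁻¹L ≤ μ(i,j) ≤ KL for every edge (i,j). Then for every s ≥ 1 and every f : V → ℝ: Σ_{i∈V} |f(i) − μ(f)|^s μ(i) ≤ 2^s N(N−1)^{s−1} K² Σ_{(i,j)∈E} |f(i) − f(j)|^s μ(i,j), where μ(f) := μ(V)⁻¹ Σ_{i∈V} f(i) μ(i) and μ(V) := Σ_{i∈V} μ(i). -/

import Mathlib

open MeasureTheory Metric Set Filter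
open scoped ENNReal NNReal Topology

noncomputable section

/-- `g` is an upper gradient of `f`: along every rectifiable curve parametrized by arc length
(formalized as a `1`-Lipschitz curve defined on an interval `[0, L]`), the variation of `f`
between the endpoints is controlled by the line integral of `g` along the curve. -/
def IsUpperGradient {X : Type*} [MetricSpace X] (f : X → ℝ) (g : X → ℝ≥0∞) : Prop :=
  ∀ L : ℝ, 0 ≤ L → ∀ γ : ℝ → X, LipschitzOnWith 1 γ (Icc 0 L) →
    ENNReal.ofReal |f (γ L) - f (γ 0)| ≤ ∫⁻ u in Icc (0 : ℝ) L, g (γ u)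

/-- Membership in `L^p(X, m)` for a real exponent `p`. -/
def MemLpR {X : Type*} [MeasurableSpace X] (m : Measure X) (p : ℝ) (f : X → ℝ) : Prop :=
  AEMeasurable f m ∧ (∫⁻ x, ENNReal.ofReal |f x| ^ p ∂m) < ∞

/-- The Cheeger `p`-energy of `f`: the infimum of `liminf ∫ gₙ^p dm` over all sequences
`fₙ ∈ L^p` converging to `f` in `L^p` and upper gradients `gₙ` of `fₙ`. -/
def cheegerEnergy {X : Type*} [MetricSpace X] [MeasurableSpace X]
    (m : Measure X) (p : ℝ) (f : X → ℝ) : ℝ≥0∞ :=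
  ⨅ (F : ℕ → X → ℝ) (G : ℕ → X → ℝ≥0∞) (_ : ∀ n, MemLpR m p (F n))
    (_ : ∀ n, IsUpperGradient (F n) (G n))
    (_ : Tendsto (fun n => ∫⁻ x, ENNReal.ofReal |F n x - f x| ^ p ∂m) atTop (𝓝 0)),
    liminf (fun n => ∫⁻ x, G n x ^ p ∂m) atTop

/-- `f ∈ H^{1,p}(X, d, m)`: `f ∈ L^p` and its Cheeger `p`-energy is finite. -/
def MemH1 {X : Type*} [MetricSpace X] [MeasurableSpace X]
    (m : Measure X) (p : ℝ) (f : X → ℝ) : Prop :=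
  MemLpR m p f ∧ cheegerEnergy m p f < ∞

/-- The measure `m` is finite and nonzero on balls of finite nonzero radius. -/
def BallRegular {X : Type*} [MetricSpace X] [MeasurableSpace X] (m : Measure X) : Prop :=
  ∀ (x : X) (r : ℝ), 0 < r → m (ball x r) ≠ 0 ∧ m (ball x r) < ∞

/-- `m` is globally doubling with doubling dimension `Q`, i.e. doubling constant `2 ^ Q`. -/
def DoublingOfDim {X : Type*} [MetricSpace X] [MeasurableSpace X]
    (m : Measure X) (Q : ℝ) : Prop :=
  ∀ (x : X) (r : ℝ), 0 < r → m (ball x (2 * r)) ≤ ENNReal.ofReal (2 ^ Q) * m (ball x r)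

/-- The weak `(p,p)` Poincaré inequality with constants `C_P > 0` and `lam ≥ 1`. -/
def WeakPoincare {X : Type*} [MetricSpace X] [MeasurableSpace X]
    (m : Measure X) (p C_P lam : ℝ) : Prop :=
  ∀ f : X → ℝ, LocallyIntegrable f m →
    ∀ g : X → ℝ≥0∞, Measurable g → IsUpperGradient f g → (∫⁻ x, g x ^ p ∂m) < ∞ →
      ∀ (x : X) (r : ℝ), 0 < r →
        ((∫⁻ y in ball x r, ENNReal.ofReal |f y - (⨍ z in ball x r, f z ∂m)| ^ p ∂m) /
            m (ball x r)) ^ (1 / p) ≤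
          ENNReal.ofReal (C_P * r) *
            ((∫⁻ y in ball x (lam * r), g y ^ p ∂m) / m (ball x (lam * r))) ^ (1 / p)

/-- Reverse doubling at the point `o`: `m(B_R(o))/m(B_r(o)) ≥ C_o (R/r)^η` for `0 < r ≤ R`. -/
def ReverseDoubling {X : Type*} [MetricSpace X] [MeasurableSpace X]
    (m : Measure X) (o : X) (C_o η : ℝ) : Prop :=
  ∀ r R : ℝ, 0 < r → r ≤ R → ENNReal.ofReal (C_o * (R / r) ^ η) * m (ball o r) ≤ m (ball o R)

/-- The weighted measure `μ_{s,t}` with density `m(B_{d(o,x)}(o))^{t/s-1} · d(o,x)^{-t}`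
with respect to `m`. -/
def weightMeasure {X : Type*} [MetricSpace X] [MeasurableSpace X]
    (m : Measure X) (o : X) (s t : ℝ) : Measure X :=
  m.withDensity fun x => m (ball o (dist o x)) ^ (t / s - 1) * ENNReal.ofReal (dist o x) ^ (-t)

/-- A geodesic metric space: any two points are joined by a curve of length equal to their
distance (formalized: a `1`-Lipschitz curve defined on `[0, d(x,y)]` from `x` to `y`). -/
def IsGeodesicSpace (X : Type*) [MetricSpace X] : Prop :=
  ∀ x y : X, ∃ γ : ℝ → X, γ 0 = x ∧ γ (dist x y) = y ∧ LipschitzOnWith 1 γ (Icc 0 (dist x y))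

/-- A good covering of the doubly measured metric space `(X, d, m, μ)`, indexed by `I`,
with parameters `Q₁` and `Q₂`. -/
structure GoodCovering {X : Type*} [MetricSpace X] [MeasurableSpace X]
    (m μ : Measure X) (I : Type*) (Q₁ Q₂ : ℝ) where
  U : I → Set X
  Ustar : I → Set X
  Usharp : I → Set X
  countable : Countable I
  measurable_U : ∀ i, MeasurableSet (U i)
  measurable_Ustar : ∀ i, MeasurableSet (Ustar i)
  measurable_Usharp : ∀ i, MeasurableSet (Usharp i)
  finite_m : ∀ i, m (Usharp i) < ∞
  finite_mu : ∀ i, μ (Usharp i) < ∞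
  U_subset_Ustar : ∀ i, U i ⊆ Ustar i
  Ustar_subset_Usharp : ∀ i, Ustar i ⊆ Usharp i
  cover_m : m (univ \ ⋃ i, U i) = 0
  cover_mu : μ (univ \ ⋃ i, U i) = 0
  overlap_finite : ∀ i, {j : I | (closure (Usharp j) ∩ closure (Usharp i)).Nonempty}.Finite
  overlap_card : ∀ i,
    (Nat.card {j : I | (closure (Usharp j) ∩ closure (Usharp i)).Nonempty} : ℝ) ≤ Q₁
  chain : ∀ i j : I, (closure (U i) ∩ closure (U j)).Nonempty →
    ∃ k : I, U i ∪ U j ⊆ Ustar k ∧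
      m (Ustar k) ≤ ENNReal.ofReal Q₂ * min (m (U i)) (m (U j)) ∧
      μ (Ustar k) ≤ ENNReal.ofReal Q₂ * min (μ (U i)) (μ (U j))


open Finset in

private lemma aux_sum_rpow_le {α : Type*} (s : ℝ) (hs : 1 ≤ s) (t : Finset α) (a : α → ℝ)
    (ha : ∀ x ∈ t, 0 ≤ a x) :
    (∑ x ∈ t, a x) ^ s ≤ (t.card : ℝ) ^ (s - 1) * ∑ x ∈ t, a x ^ s := by
  rcases t.eq_empty_or_nonempty with rfl | hne
  · simp [Real.zero_rpow (by linarith : s ≠ 0)]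
  · have hn : (0:ℝ) < t.card := by exact_mod_cast Finset.card_pos.2 hne
    have key := Real.rpow_arith_mean_le_arith_mean_rpow t (fun _ => ((t.card:ℝ))⁻¹) a
      (fun i _ => by positivity) (by simp [Finset.sum_const]; field_simp) ha hs
    have h1 : ∑ x ∈ t, ((t.card:ℝ))⁻¹ * a x = ((t.card:ℝ))⁻¹ * ∑ x ∈ t, a x := by
      rw [Finset.mul_sum]
    have h2 : ∑ x ∈ t, ((t.card:ℝ))⁻¹ * a x ^ s = ((t.card:ℝ))⁻¹ * ∑ x ∈ t, a x ^ s := by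
      rw [Finset.mul_sum]
    rw [h1, h2] at key
    have hsum : 0 ≤ ∑ x ∈ t, a x := Finset.sum_nonneg ha
    rw [Real.mul_rpow (by positivity) hsum] at key
    have := mul_le_mul_of_nonneg_left key (le_of_lt (Real.rpow_pos_of_pos hn s))
    calc (∑ x ∈ t, a x) ^ s
        = (t.card:ℝ) ^ s * (((t.card:ℝ))⁻¹ ^ s * (∑ x ∈ t, a x) ^ s) := by
          rw [← mul_assoc, ← Real.mul_rpow (le_of_lt hn) (by positivity),
            mul_inv_cancel₀ (ne_of_gt hn), Real.one_rpow, one_mul]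
      _ ≤ (t.card:ℝ) ^ s * (((t.card:ℝ))⁻¹ * ∑ x ∈ t, a x ^ s) := this
      _ = (t.card:ℝ) ^ (s - 1) * ∑ x ∈ t, a x ^ s := by
          rw [← mul_assoc, Real.rpow_sub hn, Real.rpow_one, div_eq_mul_inv]

private lemma aux_walk_abs {V : Type} {G : SimpleGraph V} (f : V → ℝ) {i j : V}
    (p : G.Walk i j) :
    |f i - f j| ≤ (p.darts.map (fun d => |f d.fst - f d.snd|)).sum := by
  induction p with
  | nil => simp
  | @cons u v w h q ih =>
    simp only [SimpleGraph.Walk.darts_cons, List.map_cons, List.sum_cons]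
    calc |f u - f w| ≤ |f u - f v| + |f v - f w| := abs_sub_le _ _ _
      _ ≤ |f u - f v| + (q.darts.map (fun d => |f d.fst - f d.snd|)).sum := by linarith [ih]


/-- Discrete s Poincaré–Neumann inequality on a finite connected weighted graph
with comparable weights. -/
theorem finite_graph_poincare_neumann
    (V : Type) [Fintype V] (E : V → V → Prop)
    (hEsymm : ∀ i j, E i j → E j i)
    (hconn : ∀ i j : V, Relation.ReflTransGen E i j)
    (hN : 2 ≤ Fintype.card V)
    (wV : V → ℝ) (wE : V → V → ℝ)
    (hwEsymm : ∀ i j, E i j → wE i j = wE j i)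
    (K L : ℝ) (hK : 1 < K) (hL : 0 < L)
    (hwV : ∀ i, K⁻¹ * L ≤ wV i ∧ wV i ≤ K * L)
    (hwE : ∀ i j, E i j → K⁻¹ * L ≤ wE i j ∧ wE i j ≤ K * L)
    (s : ℝ) (hs : 1 ≤ s) (f : V → ℝ) :
    ∑ i : V, |f i - (∑ j : V, wV j)⁻¹ * ∑ j : V, f j * wV j| ^ s * wV i ≤
      (2 : ℝ) ^ s * (Fintype.card V : ℝ) * ((Fintype.card V : ℝ) - 1) ^ (s - 1) * K ^ 2 *
        ∑ᶠ (i : V) (j : V) (_ : E i j), |f i - f j| ^ s * wE i j := by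
  classical
  have hKpos : (0:ℝ) < K := lt_trans one_pos hK
  have hNe : Nonempty V := Fintype.card_pos_iff.1 (by omega)
  set N := Fintype.card V with hNdef
  set W : ℝ := ∑ j : V, wV j with hWdef
  set m : ℝ := W⁻¹ * ∑ j : V, f j * wV j with hmdef
  have hwVpos : ∀ i, 0 < wV i := fun i => lt_of_lt_of_le (by positivity) (hwV i).1
  have hWpos : 0 < W := Finset.sum_pos (fun i _ => hwVpos i) Finset.univ_nonempty
  set S : ℝ := ∑ i : V, ∑ j : V, if E i j then |f i - f j| ^ s else 0 with hSdef
  have hS0 : 0 ≤ S := by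
    apply Finset.sum_nonneg; intro i _
    apply Finset.sum_nonneg; intro j _
    split_ifs <;> positivity
  have hN1 : (1:ℝ) ≤ (N:ℝ) - 1 := by
    have : (2:ℝ) ≤ (N:ℝ) := by exact_mod_cast hN
    linarith
  -- Step A: distance to mean bounded by distance to some vertex value
  have hA : ∀ i : V, ∃ j : V, |f i - m| ≤ |f i - f j| := by
    intro i
    obtain ⟨j0, -, hj0⟩ := Finset.exists_max_image Finset.univ
      (fun j => |f i - f j|) Finset.univ_nonempty
    refine ⟨j0, ?_⟩
    have hWm : W * m = ∑ j : V, f j * wV j := by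
      rw [hmdef, ← mul_assoc, mul_inv_cancel₀ (ne_of_gt hWpos), one_mul]
    have h1 : W * (f i - m) = ∑ j : V, (f i - f j) * wV j := by
      have h0 : ∑ j : V, (f i - f j) * wV j = f i * W - ∑ j : V, f j * wV j := by
        simp only [sub_mul]
        rw [Finset.sum_sub_distrib, ← Finset.mul_sum]
      rw [h0, ← hWm]; ring
    have h2 : W * |f i - m| ≤ |f i - f j0| * W := by
      calc W * |f i - m| = |W * (f i - m)| := by rw [abs_mul, abs_of_pos hWpos]
        _ = |∑ j : V, (f i - f j) * wV j| := by rw [h1]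
        _ ≤ ∑ j : V, |(f i - f j) * wV j| := Finset.abs_sum_le_sum_abs _ _
        _ ≤ ∑ j : V, |f i - f j0| * wV j := by
            apply Finset.sum_le_sum; intro j _
            rw [abs_mul, abs_of_pos (hwVpos j)]
            exact mul_le_mul_of_nonneg_right (hj0 j (Finset.mem_univ j)) (hwVpos j).le
        _ = |f i - f j0| * W := by rw [← Finset.mul_sum]
    exact le_of_mul_le_mul_left (by linarith) hWpos
  -- Step B: chain inequality
  have hB : ∀ i j : V, |f i - f j| ^ s ≤ ((N:ℝ) - 1) ^ (s-1) * S := by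
    intro i j
    set G : SimpleGraph V := SimpleGraph.fromRel E with hG
    have hreach : G.Reachable i j := by
      rw [SimpleGraph.reachable_iff_reflTransGen]
      induction hconn i j with
      | refl => exact Relation.ReflTransGen.refl
      | @tail b c hab hbc ih =>
        rcases eq_or_ne b c with rfl | hbc'
        · exact ih
        · exact ih.tail ((SimpleGraph.fromRel_adj E b c).2 ⟨hbc', Or.inl hbc⟩)
    obtain ⟨p0⟩ := hreach
    obtain ⟨p, hpath⟩ := p0.toPath
    have hlen : p.length < N := hpath.length_lt
    have hnodupE : (p.darts.map SimpleGraph.Dart.edge).Nodup := hpath.isTrail.edges_nodup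
    have hnodupD : p.darts.Nodup := List.Nodup.of_map _ hnodupE
    have step1 : |f i - f j| ≤ ∑ d ∈ p.darts.toFinset, |f d.fst - f d.snd| := by
      rw [List.sum_toFinset _ hnodupD]
      exact aux_walk_abs f p
    have step2 : |f i - f j| ^ s ≤
        (p.darts.toFinset.card : ℝ) ^ (s-1) * ∑ d ∈ p.darts.toFinset, |f d.fst - f d.snd| ^ s := by
      calc |f i - f j| ^ s ≤ (∑ d ∈ p.darts.toFinset, |f d.fst - f d.snd|) ^ s :=
            Real.rpow_le_rpow (abs_nonneg _) step1 (by linarith)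
        _ ≤ _ := aux_sum_rpow_le s hs _ _ (fun d _ => abs_nonneg _)
    have hcard : p.darts.toFinset.card = p.length := by
      rw [List.toFinset_card_of_nodup hnodupD, SimpleGraph.Walk.length_darts]
    set q : G.Dart → V × V :=
      fun d => if E d.fst d.snd then (d.fst, d.snd) else (d.snd, d.fst) with hq
    have hadj : ∀ d : G.Dart, d.fst ≠ d.snd ∧ (E d.fst d.snd ∨ E d.snd d.fst) := by
      intro d
      exact (SimpleGraph.fromRel_adj E d.fst d.snd).1 d.adj
    have hqE : ∀ d : G.Dart, E (q d).1 (q d).2 := by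
      intro d
      by_cases h : E d.fst d.snd
      · simp [hq, h]
      · simp only [hq, if_neg h]
        exact ((hadj d).2).resolve_left h
    have hqedge : ∀ d : G.Dart, Sym2.mk (q d).1 (q d).2 = d.edge := by
      intro d
      by_cases h : E d.fst d.snd
      · simp [hq, h, SimpleGraph.Dart.edge]
      · simp only [hq, if_neg h, SimpleGraph.Dart.edge]
        rw [Sym2.eq_swap]
    have hval : ∀ d : G.Dart, |f (q d).1 - f (q d).2| ^ s = |f d.fst - f d.snd| ^ s := by
      intro d
      by_cases h : E d.fst d.snd
      · simp [hq, h]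
      · simp only [hq, if_neg h]
        rw [abs_sub_comm]
    have step3 : ∑ d ∈ p.darts.toFinset, |f d.fst - f d.snd| ^ s ≤ S := by
      have himg : ∑ pq ∈ p.darts.toFinset.image q, |f pq.1 - f pq.2| ^ s
          = ∑ d ∈ p.darts.toFinset, |f d.fst - f d.snd| ^ s := by
        rw [Finset.sum_image]
        · exact Finset.sum_congr rfl (fun d _ => hval d)
        · intro d1 h1 d2 h2 heq
          exact List.inj_on_of_nodup_map hnodupE (List.mem_toFinset.1 h1)
            (List.mem_toFinset.1 h2) (by rw [← hqedge, ← hqedge, heq])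
      rw [← himg]
      have hSeq : S = ∑ pq : V × V, if E pq.1 pq.2 then |f pq.1 - f pq.2| ^ s else 0 := by
        rw [hSdef]
        exact (Fintype.sum_prod_type
          (f := fun pq : V × V => if E pq.1 pq.2 then |f pq.1 - f pq.2| ^ s else 0)).symm
      rw [hSeq]
      calc ∑ pq ∈ p.darts.toFinset.image q, |f pq.1 - f pq.2| ^ s
          = ∑ pq ∈ p.darts.toFinset.image q,
              (if E pq.1 pq.2 then |f pq.1 - f pq.2| ^ s else 0) := by
            apply Finset.sum_congr rfl; intro pq hpq
            obtain ⟨d, hd, rfl⟩ := Finset.mem_image.1 hpq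
            rw [if_pos (hqE d)]
        _ ≤ ∑ pq : V × V, (if E pq.1 pq.2 then |f pq.1 - f pq.2| ^ s else 0) := by
            apply Finset.sum_le_sum_of_subset_of_nonneg (Finset.subset_univ _)
            intro pq _ _
            split_ifs <;> positivity
    have hNlen : (p.darts.toFinset.card : ℝ) ^ (s-1) ≤ ((N:ℝ)-1) ^ (s-1) := by
      apply Real.rpow_le_rpow (Nat.cast_nonneg _) ?_ (by linarith)
      rw [hcard]
      have : p.length + 1 ≤ N := hlen
      have h' : (p.length : ℝ) + 1 ≤ (N:ℝ) := by exact_mod_cast this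
      linarith
    calc |f i - f j| ^ s
        ≤ (p.darts.toFinset.card : ℝ) ^ (s-1) *
            ∑ d ∈ p.darts.toFinset, |f d.fst - f d.snd| ^ s := step2
      _ ≤ ((N:ℝ)-1) ^ (s-1) * S := by
          apply mul_le_mul hNlen step3 ?_ (Real.rpow_nonneg (by linarith) _)
          exact Finset.sum_nonneg (fun d _ => Real.rpow_nonneg (abs_nonneg _) s)
  -- rewrite the finsum
  have hfin : ∑ᶠ (i : V) (j : V) (_ : E i j), |f i - f j| ^ s * wE i j
      = ∑ i : V, ∑ j : V, if E i j then |f i - f j| ^ s * wE i j else 0 := by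
    rw [finsum_eq_sum_of_fintype]
    refine Finset.sum_congr rfl fun i _ => ?_
    rw [finsum_eq_sum_of_fintype]
    exact Finset.sum_congr rfl fun j _ => finsum_eq_if
  rw [hfin]
  set T : ℝ := ∑ i : V, ∑ j : V, if E i j then |f i - f j| ^ s * wE i j else 0 with hTdef
  have hT : K⁻¹ * L * S ≤ T := by
    rw [hSdef, hTdef, Finset.mul_sum]
    apply Finset.sum_le_sum; intro i _
    rw [Finset.mul_sum]
    apply Finset.sum_le_sum; intro j _
    by_cases h : E i j
    · simp only [if_pos h]
      calc K⁻¹ * L * |f i - f j| ^ s = |f i - f j| ^ s * (K⁻¹ * L) := by ring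
        _ ≤ |f i - f j| ^ s * wE i j :=
            mul_le_mul_of_nonneg_left (hwE i j h).1 (Real.rpow_nonneg (abs_nonneg _) s)
    · simp [h]
  have hLHS : ∑ i : V, |f i - m| ^ s * wV i ≤ (N:ℝ) * (((N:ℝ)-1)^(s-1) * S * (K*L)) := by
    calc ∑ i : V, |f i - m| ^ s * wV i
        ≤ ∑ _i : V, ((N:ℝ)-1)^(s-1) * S * (K*L) := by
          apply Finset.sum_le_sum; intro i _
          obtain ⟨j, hj⟩ := hA i
          have h1 : |f i - m| ^ s ≤ |f i - f j| ^ s :=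
            Real.rpow_le_rpow (abs_nonneg _) hj (by linarith)
          exact mul_le_mul (h1.trans (hB i j)) (hwV i).2 (hwVpos i).le
            (mul_nonneg (Real.rpow_nonneg (by linarith) _) hS0)
      _ = (N:ℝ) * (((N:ℝ)-1)^(s-1) * S * (K*L)) := by
          rw [Finset.sum_const, Finset.card_univ, nsmul_eq_mul]
  have h2s : (1:ℝ) ≤ 2 ^ s := by
    rw [show (1:ℝ) = (2:ℝ)^(0:ℝ) from (Real.rpow_zero 2).symm]
    exact Real.rpow_le_rpow_of_exponent_le one_le_two (by linarith)
  have hA0 : 0 ≤ (N:ℝ) * (((N:ℝ)-1)^(s-1)) * L * S := by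
    have := Real.rpow_nonneg (show (0:ℝ) ≤ (N:ℝ)-1 by linarith) (s-1)
    positivity
  calc ∑ i : V, |f i - m| ^ s * wV i
      ≤ (N:ℝ) * (((N:ℝ)-1)^(s-1) * S * (K*L)) := hLHS
    _ = K * ((N:ℝ) * (((N:ℝ)-1)^(s-1)) * L * S) := by ring
    _ ≤ 2^s * (K * ((N:ℝ) * (((N:ℝ)-1)^(s-1)) * L * S)) :=
        le_mul_of_one_le_left (mul_nonneg hKpos.le hA0) h2s
    _ = (2:ℝ)^s * (N:ℝ) * ((N:ℝ)-1)^(s-1) * K^2 * (K⁻¹ * L * S) := by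
        field_simp
    _ ≤ (2:ℝ)^s * (N:ℝ) * ((N:ℝ)-1)^(s-1) * K^2 * T := by
        apply mul_le_mul_of_nonneg_left hT
        have := Real.rpow_nonneg (show (0:ℝ) ≤ (N:ℝ)-1 by linarith) (s-1)
        have h2 : (0:ℝ) ≤ 2^s := by positivity
        positivity
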